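/- Let g: (−r, r) → ℝ be odd and strictly increasing with g(0) = 0, and for x ∈ ℝ³ with ‖x‖ < r define y(x) = g(‖x‖) x/‖x‖ (with y(0) = 0). If ‖x_j‖ ≤ ‖x_i‖ for all j in a finite index set N, and a_ij ≥ 0, then ⟨x_i, Σ_{j∈N} a_ij (y(x_j) − y(x_i))⟩ ≤ 0, with equality if and only if a_ij (x_j − x_i) = 0 for all j ∈ N. -/

import Mathlib

open Finset

/-- The Lyapunov inequality for the rotation consensus law: with
`y(x) = g(‖x‖) x/‖x‖` for odd, strictly increasing `g` with `g(0)=0`, if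
`‖x_j‖ ≤ ‖x_i‖` for all `j ∈ N` and `a_ij ≥ 0`, then
`⟨x_i, Σ_{j∈N} a_ij (y(x_j) − y(x_i))⟩ ≤ 0`, with equality iff
`a_ij (x_j − x_i) = 0` for all `j ∈ N`. -/
theorem lyapunov_inequality (r : ℝ) (hr : 0 < r) (g : ℝ → ℝ)
    (hodd : ∀ s, g (-s) = -g s) (hg0 : g 0 = 0)
    (hmono : StrictMonoOn g (Set.Ioo (-r) r))
    (y : EuclideanSpace ℝ (Fin 3) → EuclideanSpace ℝ (Fin 3))
    (hy : ∀ x, x ≠ 0 → y x = (g ‖x‖ / ‖x‖) • x) (hy0 : y 0 = 0)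
    {ι : Type*} (N : Finset ι) (x : ι → EuclideanSpace ℝ (Fin 3)) (a : ι → ℝ)
    (ha : ∀ j, 0 ≤ a j) (i : ι)
    (hxi : ‖x i‖ < r) (hle : ∀ j ∈ N, ‖x j‖ ≤ ‖x i‖) :
    (inner ℝ (x i) (∑ j ∈ N, a j • (y (x j) - y (x i))) : ℝ) ≤ 0 ∧
    ((inner ℝ (x i) (∑ j ∈ N, a j • (y (x j) - y (x i))) : ℝ) = 0 ↔
      ∀ j ∈ N, a j • (x j - x i) = 0) := by
  have hmemi : ‖x i‖ ∈ Set.Ioo (-r) r := ⟨by linarith [norm_nonneg (x i)], hxi⟩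
  have hgnn : ∀ s, 0 ≤ s → s < r → 0 ≤ g s := by
    intro s h1 h2
    rcases eq_or_lt_of_le h1 with h | h
    · rw [← h, hg0]
    · have := hmono ⟨by linarith, hr⟩ ⟨by linarith, h2⟩ h
      rw [hg0] at this; exact this.le
  have hmemj : ∀ j ∈ N, ‖x j‖ ∈ Set.Ioo (-r) r := fun j hj =>
    ⟨by linarith [norm_nonneg (x j)], lt_of_le_of_lt (hle j hj) hxi⟩
  have hyi : (inner ℝ (x i) (y (x i)) : ℝ) = g ‖x i‖ * ‖x i‖ := by
    by_cases h : x i = 0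
    · simp [h, hy0, hg0]
    · rw [hy _ h, real_inner_smul_right, real_inner_self_eq_norm_mul_norm]
      have : ‖x i‖ ≠ 0 := norm_ne_zero_iff.mpr h
      field_simp
  have key : ∀ j ∈ N, (inner ℝ (x i) (y (x j)) : ℝ) ≤ g ‖x i‖ * ‖x i‖ := by
    intro j hj
    have hgi : 0 ≤ g ‖x i‖ := hgnn _ (norm_nonneg _) hxi
    by_cases hxj : x j = 0
    · rw [hxj, hy0, inner_zero_right]
      exact mul_nonneg hgi (norm_nonneg _)
    · rw [hy _ hxj, real_inner_smul_right]
      have hnj : 0 < ‖x j‖ := norm_pos_iff.mpr hxj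
      have hgj : 0 ≤ g ‖x j‖ := hgnn _ hnj.le (hmemj j hj).2
      calc g ‖x j‖ / ‖x j‖ * inner ℝ (x i) (x j)
          ≤ g ‖x j‖ / ‖x j‖ * (‖x i‖ * ‖x j‖) :=
            mul_le_mul_of_nonneg_left (real_inner_le_norm _ _) (by positivity)
        _ = g ‖x j‖ * ‖x i‖ := by field_simp
        _ ≤ g ‖x i‖ * ‖x i‖ :=
            mul_le_mul_of_nonneg_right
              (hmono.monotoneOn (hmemj j hj) hmemi (hle j hj)) (norm_nonneg _)
  have keyeq : ∀ j ∈ N, (inner ℝ (x i) (y (x j)) : ℝ) = g ‖x i‖ * ‖x i‖ → x j = x i := by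
    intro j hj heq
    by_cases hxi0 : x i = 0
    · have : ‖x j‖ ≤ 0 := by simpa [hxi0] using hle j hj
      rw [hxi0]
      exact norm_le_zero_iff.mp this
    · have hni : 0 < ‖x i‖ := norm_pos_iff.mpr hxi0
      have hgi : 0 < g ‖x i‖ := by
        have := hmono ⟨by linarith, hr⟩ hmemi hni
        rwa [hg0] at this
      by_cases hxj : x j = 0
      · rw [hxj, hy0, inner_zero_right] at heq
        nlinarith
      · have hnj : 0 < ‖x j‖ := norm_pos_iff.mpr hxj
        rw [hy _ hxj, real_inner_smul_right] at heq
        have hB : g ‖x j‖ / ‖x j‖ * inner ℝ (x i) (x j) ≤ g ‖x j‖ * ‖x i‖ := by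
          have hgj : 0 ≤ g ‖x j‖ := hgnn _ hnj.le (hmemj j hj).2
          calc g ‖x j‖ / ‖x j‖ * inner ℝ (x i) (x j)
              ≤ g ‖x j‖ / ‖x j‖ * (‖x i‖ * ‖x j‖) :=
                mul_le_mul_of_nonneg_left (real_inner_le_norm _ _) (by positivity)
            _ = g ‖x j‖ * ‖x i‖ := by field_simp
        have hC : g ‖x j‖ * ‖x i‖ ≤ g ‖x i‖ * ‖x i‖ :=
          mul_le_mul_of_nonneg_right
            (hmono.monotoneOn (hmemj j hj) hmemi (hle j hj)) (norm_nonneg _)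
        -- equality forces both
        have hBC : g ‖x j‖ * ‖x i‖ = g ‖x i‖ * ‖x i‖ := le_antisymm hC (by linarith)
        have hgeq : g ‖x j‖ = g ‖x i‖ := by
          have := mul_right_cancel₀ (ne_of_gt hni) hBC
          exact this
        have hneq : ‖x j‖ = ‖x i‖ :=
          hmono.injOn (hmemj j hj) hmemi hgeq
        have hgj : 0 < g ‖x j‖ := hgeq ▸ hgi
        have hAB : g ‖x j‖ / ‖x j‖ * inner ℝ (x i) (x j) = g ‖x j‖ * ‖x i‖ := by linarith
        have hinner : (inner ℝ (x i) (x j) : ℝ) = ‖x i‖ * ‖x j‖ := by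
          have hc : 0 < g ‖x j‖ / ‖x j‖ := by positivity
          have hr2 : g ‖x j‖ * ‖x i‖ = g ‖x j‖ / ‖x j‖ * (‖x i‖ * ‖x j‖) := by
            field_simp
          exact mul_left_cancel₀ (ne_of_gt hc) (by rw [← hr2]; exact hAB)
        have := inner_eq_norm_mul_iff_real.mp hinner
        -- ‖x j‖ • x i = ‖x i‖ • x j
        rw [hneq] at this
        exact (smul_right_injective _ (ne_of_gt hni) this).symm
  have hsum : (inner ℝ (x i) (∑ j ∈ N, a j • (y (x j) - y (x i))) : ℝ)
      = ∑ j ∈ N, a j * ((inner ℝ (x i) (y (x j)) : ℝ) - g ‖x i‖ * ‖x i‖) := by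
    rw [inner_sum]
    refine Finset.sum_congr rfl fun j hj => ?_
    rw [real_inner_smul_right, inner_sub_right, hyi]
  have hterm : ∀ j ∈ N, a j * ((inner ℝ (x i) (y (x j)) : ℝ) - g ‖x i‖ * ‖x i‖) ≤ 0 :=
    fun j hj => mul_nonpos_of_nonneg_of_nonpos (ha j) (sub_nonpos.mpr (key j hj))
  constructor
  · rw [hsum]; exact Finset.sum_nonpos hterm
  · rw [hsum, Finset.sum_eq_zero_iff_of_nonpos hterm]
    constructor
    · intro h j hj
      rcases mul_eq_zero.mp (h j hj) with h' | h'
      · rw [h', zero_smul]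
      · have hxji := keyeq j hj (by linarith [sub_eq_zero.mp h'])
        rw [hxji, sub_self, smul_zero]
    · intro h j hj
      rcases smul_eq_zero.mp (h j hj) with h' | h'
      · rw [h', zero_mul]
      · have hxji : x j = x i := sub_eq_zero.mp h'
        rw [hxji, hyi, sub_self, mul_zero]
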